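/- Suppose G is a torsion-free abelian group containing no subgroup isomorphic to ℚ. The following are equivalent: (1) there exists an injective additive group homomorphism h : (ℕ → ℤ) →+ G; (2) there exists a sequence c : ℕ → G such that: (A) for every a ∈ S* there exists y ∈ G with φ_a(y; c); (B) for all a¹, a² ∈ S* there exist y₁, y₂, y₃ ∈ G with φ_{a¹}(y₁; c), φ_{a²}(y₂; c), φ_{a¹-a²}(y₃; c), and y₃ = y₁ - y₂; (C) for every m ∈ ℕ, the elements c(0), ..., c(m-1) are linearly independent over ℤ (if integers k_0, ..., k_{m-1} satisfy Σ_{l<m} k_l • c(l) = 0 then all k_l = 0); (D) for every a ∈ S* with a ≠ 0, there exists y ∈ G with y ≠ 0 and φ_a(y; c). -/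

import Mathlib

/-- A group `G` is torsion-free: `n • x ≠ 0` for every `x ≠ 0` and integer `n > 0`. -/
def IsTorsionFreeGroup (G : Type*) [AddCommGroup G] : Prop :=
  ∀ x : G, x ≠ 0 → ∀ n : ℤ, 0 < n → n • x ≠ 0

/-- `G` contains a subgroup isomorphic to `A`. -/
def ContainsCopy (A G : Type*) [AddCommGroup A] [AddCommGroup G] : Prop :=
  ∃ f : A →+ G, Function.Injective f

/-- `S* = {a : ℕ → ℤ | ∀ n, n! ∣ a n}`. -/
def Sstar : Set (ℕ → ℤ) := {a | ∀ n : ℕ, (n.factorial : ℤ) ∣ a n}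

/-- The formula `φ_a(y; c)`: for every `n`, `n!` divides `y - Σ_{l<n} a l • c l` in `G`. -/
def PhiFormula {G : Type*} [AddCommGroup G] (a : ℕ → ℤ) (c : ℕ → G) (y : G) : Prop :=
  ∀ n : ℕ, ∃ z : G, (n.factorial : ℤ) • z = y - ∑ l ∈ Finset.range n, a l • c l

private lemma tf_smul_eq_zero {G : Type*} [AddCommGroup G] (hG : IsTorsionFreeGroup G)
    {k : ℤ} (hk : k ≠ 0) {w : G} (h : k • w = 0) : w = 0 := by
  by_contra hw
  rcases hk.lt_or_gt with h1 | h1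
  · exact hG w hw (-k) (by linarith) (by rw [neg_smul, h, neg_zero])
  · exact hG w hw k h1 h

private lemma tf_smul_cancel {G : Type*} [AddCommGroup G] (hG : IsTorsionFreeGroup G)
    {k : ℤ} (hk : k ≠ 0) {a b : G} (h : k • a = k • b) : a = b := by
  have := tf_smul_eq_zero hG hk (w := a - b) (by rw [smul_sub, h, sub_self])
  exact sub_eq_zero.mp this

/-- In a torsion-free group with no copy of ℚ, an element divisible by all `n!` is zero. -/
private lemma eq_zero_of_forall_factorial_dvd {G : Type*} [AddCommGroup G]
    (hG : IsTorsionFreeGroup G) (hQ : ¬ ContainsCopy ℚ G) (x : G)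
    (hx : ∀ n : ℕ, ∃ z : G, (n.factorial : ℤ) • z = x) : x = 0 := by
  by_contra hx0
  apply hQ
  choose z hz using hx
  have hfac : ∀ n : ℕ, ((n.factorial : ℤ)) ≠ 0 := fun n => by
    exact_mod_cast (Nat.factorial_pos n).ne'
  have hzne : ∀ n, z n ≠ 0 := by
    intro n h
    apply hx0
    rw [← hz n, h, smul_zero]
  have step : ∀ {n m : ℕ}, n ≤ m → ((m.factorial / n.factorial : ℕ) : ℤ) • z m = z n := by
    intro n m hnm
    apply tf_smul_cancel hG (hfac n)
    rw [smul_smul, hz n]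
    have hd : n.factorial ∣ m.factorial := Nat.factorial_dvd_factorial hnm
    have : (n.factorial : ℤ) * ((m.factorial / n.factorial : ℕ) : ℤ) = (m.factorial : ℤ) := by
      exact_mod_cast Nat.mul_div_cancel' hd
    rw [this, hz m]
  set F : ℚ → G := fun q => (q.num * ((q.den.factorial / q.den : ℕ) : ℤ)) • z q.den with hF
  have key : ∀ (q : ℚ) (m : ℤ) (n : ℕ), (m : ℚ) = q * n.factorial → F q = m • z n := by
    intro q m n hm
    have hd0 : (q.den : ℤ) ≠ 0 := by exact_mod_cast q.den_nz
    have hmd : m * q.den = q.num * n.factorial := by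
      have h2 : (m : ℚ) * q.den = (q.num : ℚ) * n.factorial := by
        rw [hm, mul_right_comm, Rat.mul_den_eq_num]
      exact_mod_cast h2
    set N := max n q.den with hN
    have hdz : z q.den = ((N.factorial / q.den.factorial : ℕ) : ℤ) • z N :=
      (step (le_max_right n q.den)).symm
    have hnz : z n = ((N.factorial / n.factorial : ℕ) : ℤ) • z N :=
      (step (le_max_left n q.den)).symm
    show (q.num * ((q.den.factorial / q.den : ℕ) : ℤ)) • z q.den = m • z n
    rw [hdz, hnz, smul_smul, smul_smul]
    congr 1
    have hA : (q.den : ℤ) * ((q.den.factorial / q.den : ℕ) : ℤ) = (q.den.factorial : ℤ) := by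
      exact_mod_cast Nat.mul_div_cancel' (Nat.dvd_factorial q.pos le_rfl)
    have hB : (q.den.factorial : ℤ) * ((N.factorial / q.den.factorial : ℕ) : ℤ)
        = (N.factorial : ℤ) := by
      exact_mod_cast Nat.mul_div_cancel'
        (Nat.factorial_dvd_factorial (le_max_right n q.den))
    have hC : (n.factorial : ℤ) * ((N.factorial / n.factorial : ℕ) : ℤ)
        = (N.factorial : ℤ) := by
      exact_mod_cast Nat.mul_div_cancel'
        (Nat.factorial_dvd_factorial (le_max_left n q.den))
    apply mul_right_cancel₀ hd0
    linear_combination (q.num * ((N.factorial / q.den.factorial : ℕ) : ℤ)) * hA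
      + q.num * hB - q.num * hC - ((N.factorial / n.factorial : ℕ) : ℤ) * hmd
  have castlem : ∀ (s : ℚ) (n : ℕ), s.den ∣ n.factorial →
      ((s.num * ((n.factorial / s.den : ℕ) : ℤ) : ℤ) : ℚ) = s * n.factorial := by
    intro s n hs
    have hden : ((s.den : ℚ)) ≠ 0 := by exact_mod_cast s.den_nz
    have h1 : ((n.factorial / s.den : ℕ) : ℚ) = (n.factorial : ℚ) / s.den :=
      Nat.cast_div hs hden
    rw [Int.cast_mul, Int.cast_natCast, h1]
    conv_rhs => rw [← Rat.num_div_den s]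
    field_simp
  have Fadd : ∀ q r : ℚ, F (q + r) = F q + F r := by
    intro q r
    set n := q.den * r.den with hn
    have hnpos : 0 < n := mul_pos q.pos r.pos
    have hnf : n ∣ n.factorial := Nat.dvd_factorial hnpos le_rfl
    have hdq : q.den ∣ n.factorial := (dvd_mul_right _ _).trans hnf
    have hdr : r.den ∣ n.factorial := (dvd_mul_left _ _).trans hnf
    have hdqr : (q + r).den ∣ n.factorial := (Rat.add_den_dvd q r).trans hnf
    have h1 := key q _ n (castlem q n hdq)
    have h2 := key r _ n (castlem r n hdr)
    have h3 : F (q + r) = (q.num * ((n.factorial / q.den : ℕ) : ℤ)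
        + r.num * ((n.factorial / r.den : ℕ) : ℤ)) • z n := by
      apply key
      rw [Int.cast_add, castlem q n hdq, castlem r n hdr]
      ring
    rw [h3, h1, h2, add_smul]
  refine ⟨AddMonoidHom.mk' F Fadd, ?_⟩
  rw [injective_iff_map_eq_zero]
  intro q hq
  by_contra hq0
  have hnum : q.num ≠ 0 := Rat.num_ne_zero.mpr hq0
  have hApos : (0:ℕ) < q.den.factorial / q.den :=
    Nat.div_pos (Nat.self_le_factorial q.den) q.pos
  have hk : q.num * ((q.den.factorial / q.den : ℕ) : ℤ) ≠ 0 :=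
    mul_ne_zero hnum (by exact_mod_cast hApos.ne')
  exact hzne q.den (tf_smul_eq_zero hG hk hq)

/-- A torsion-free group with no copy of `ℚ` embeds the Baer-Specker group iff
it has a sequence satisfying conditions (A)-(D) of `φ*`. -/
theorem specker_embeds_iff (G : Type*) [AddCommGroup G]
    (hG : IsTorsionFreeGroup G) (hQ : ¬ ContainsCopy ℚ G) :
    (∃ h : (ℕ → ℤ) →+ G, Function.Injective h) ↔
    ∃ c : ℕ → G,
      (∀ a ∈ Sstar, ∃ y : G, PhiFormula a c y) ∧
      (∀ a₁ ∈ Sstar, ∀ a₂ ∈ Sstar, ∃ y₁ y₂ y₃ : G,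
        PhiFormula a₁ c y₁ ∧ PhiFormula a₂ c y₂ ∧
        PhiFormula (a₁ - a₂) c y₃ ∧ y₃ = y₁ - y₂) ∧
      (∀ (m : ℕ) (k : ℕ → ℤ),
        (∑ l ∈ Finset.range m, k l • c l) = 0 → ∀ l < m, k l = 0) ∧
      (∀ a ∈ Sstar, a ≠ 0 → ∃ y : G, y ≠ 0 ∧ PhiFormula a c y) := by
  constructor
  · rintro ⟨h, hinj⟩
    set c : ℕ → G := fun l => h (Pi.single l 1) with hc
    have hsum : ∀ (a : ℕ → ℤ) (n : ℕ),
        ∑ l ∈ Finset.range n, a l • c l = h (fun m => if m < n then a m else 0) := by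
      intro a n
      have he : (fun m => if m < n then a m else 0)
          = ∑ l ∈ Finset.range n, a l • Pi.single l (1:ℤ) := by
        funext m
        rw [Finset.sum_apply]
        simp only [Pi.smul_apply, Pi.single_apply, smul_eq_mul, mul_ite, mul_one, mul_zero]
        rw [Finset.sum_ite_eq (Finset.range n) m a]
        simp [Finset.mem_range]
      rw [he, map_sum]
      exact Finset.sum_congr rfl fun l _ => (map_zsmul h (a l) _).symm
    have phi : ∀ a ∈ Sstar, PhiFormula a c (h a) := by
      intro a ha n
      refine ⟨h (fun m => if m < n then 0 else a m / (n.factorial : ℤ)), ?_⟩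
      rw [← map_zsmul, hsum a n, ← map_sub]
      congr 1
      funext m
      simp only [Pi.smul_apply, Pi.sub_apply, smul_eq_mul]
      by_cases hm : m < n
      · simp [hm]
      · simp only [hm, if_neg, if_false]
        have hdvd : (n.factorial : ℤ) ∣ a m :=
          (Int.natCast_dvd_natCast.mpr (Nat.factorial_dvd_factorial (le_of_not_gt hm))).trans
            (ha m)
        rw [Int.mul_ediv_cancel' hdvd]
        ring
    refine ⟨c, ?_, ?_, ?_, ?_⟩
    · exact fun a ha => ⟨h a, phi a ha⟩
    · intro a₁ ha₁ a₂ ha₂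
      exact ⟨h a₁, h a₂, h (a₁ - a₂), phi a₁ ha₁, phi a₂ ha₂,
        phi _ (fun n => dvd_sub (ha₁ n) (ha₂ n)), map_sub h a₁ a₂⟩
    · intro m k hk l hl
      rw [hsum k m] at hk
      have : (fun j => if j < m then k j else 0) = (0 : ℕ → ℤ) :=
        hinj (by rw [hk, map_zero])
      have := congrFun this l
      simpa [hl] using this
    · intro a ha ha0
      refine ⟨h a, ?_, phi a ha⟩
      intro h0
      exact ha0 (hinj (by rw [h0, map_zero]))
  · rintro ⟨c, hA, hB, _hC, hD⟩
    have uniq : ∀ (a : ℕ → ℤ) (y y' : G), PhiFormula a c y → PhiFormula a c y' → y = y' := by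
      intro a y y' hy hy'
      have hdu : ∀ n : ℕ, ∃ z : G, (n.factorial : ℤ) • z = y - y' := by
        intro n
        obtain ⟨z1, hz1⟩ := hy n
        obtain ⟨z2, hz2⟩ := hy' n
        exact ⟨z1 - z2, by rw [smul_sub, hz1, hz2]; abel⟩
      exact sub_eq_zero.mp (eq_zero_of_forall_factorial_dvd hG hQ _ hdu)
    set ab : (ℕ → ℤ) → (ℕ → ℤ) := fun b n => (n.factorial : ℤ) * b n with hab
    have hmem : ∀ b, ab b ∈ Sstar := fun b n => dvd_mul_right _ _
    have hDex : ∀ b : ℕ → ℤ, ∃ y : G, PhiFormula (ab b) c y := fun b => hA (ab b) (hmem b)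
    choose D hDspec using hDex
    have Dadd : ∀ b₁ b₂ : ℕ → ℤ, D (b₁ + b₂) = D b₁ + D b₂ := by
      intro b₁ b₂
      obtain ⟨y₁, y₂, y₃, h₁, h₂, h₃, he⟩ := hB (ab (b₁ + b₂)) (hmem _) (ab b₂) (hmem _)
      have e3 : ab (b₁ + b₂) - ab b₂ = ab b₁ := by
        funext n; simp [ab]; ring
      rw [e3] at h₃
      have e1 : D (b₁ + b₂) = y₁ := uniq _ _ _ (hDspec _) h₁
      have e2 : D b₂ = y₂ := uniq _ _ _ (hDspec _) h₂
      have e4 : D b₁ = y₃ := uniq _ _ _ (hDspec _) h₃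
      rw [e1, e2, e4, he]; abel
    refine ⟨AddMonoidHom.mk' D Dadd, ?_⟩
    rw [injective_iff_map_eq_zero]
    intro b hb
    by_contra hb0
    have habne : ab b ≠ 0 := by
      intro h0
      apply hb0
      funext n
      have := congrFun h0 n
      have hfac : ((n.factorial : ℤ)) ≠ 0 := by
        exact_mod_cast (Nat.factorial_pos n).ne'
      simpa [ab, hfac, Nat.factorial_ne_zero] using this
    obtain ⟨y, hy0, hyφ⟩ := hD (ab b) (hmem b) habne
    exact hy0 ((uniq _ _ _ hyφ (hDspec b)).symm ▸ hb)
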